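/- Let M be a compact metric space, φ a continuous flow on M, and H ⊆ M a nonsingular compact invariant set (H contains no fixed point of φ). If H has the finite pseudo-orbit tracing property (FPOTP), then H has the strong pseudo-orbit tracing property (SPOTP). -/

import Mathlib

/-- Partial time sums of a bi-infinite chain: `S 0 = 0`, `S i = t 0 + ⋯ + t (i-1)` for `i > 0`,
and `S i = -(t (-1) + ⋯ + t i)` for `i < 0`. -/
noncomputable def chainS (t : ℤ → ℝ) (i : ℤ) : ℝ :=
  if 0 ≤ i then ∑ j ∈ Finset.range i.toNat, t (j : ℤ)
  else -∑ j ∈ Finset.range (-i).toNat, t (-((j : ℤ) + 1))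

/-- Partial time sums of a finite chain: `S 0 = 0`, `S i = t 0 + ⋯ + t (i-1)`. -/
noncomputable def finChainS (t : ℕ → ℝ) (i : ℕ) : ℝ := ∑ j ∈ Finset.range i, t j

section PotpHelpers
open Filter Topology Set



theorem finChainS_zero (t : ℕ → ℝ) : finChainS t 0 = 0 := by simp [finChainS]

theorem finChainS_succ (t : ℕ → ℝ) (i : ℕ) : finChainS t (i + 1) = finChainS t i + t i :=
  Finset.sum_range_succ t i

theorem chainS_zero (t : ℤ → ℝ) : chainS t 0 = 0 := by simp [chainS]

theorem chainS_succ (t : ℤ → ℝ) (i : ℤ) : chainS t (i + 1) = chainS t i + t i := by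
  rcases le_or_gt 0 i with hi | hi
  · have h1 : (0:ℤ) ≤ i + 1 := by omega
    have h2 : (i + 1).toNat = i.toNat + 1 := by omega
    simp only [chainS, if_pos hi, if_pos h1, h2, Finset.sum_range_succ]
    congr 2
    omega
  · rcases eq_or_lt_of_le (by omega : i + 1 ≤ 0) with h1 | h1
    · have hi1 : i = -1 := by omega
      subst hi1
      simp [chainS, Finset.sum_range_one]
    · have h2 : ¬ (0:ℤ) ≤ i + 1 := by omega
      have h3 : ¬ (0:ℤ) ≤ i := by omega
      have h4 : (-i).toNat = (-(i+1)).toNat + 1 := by omega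
      simp only [chainS, if_neg h2, if_neg h3, h4, Finset.sum_range_succ]
      have h5 : ((( -(i+1)).toNat : ℤ)) = -(i+1) := by omega
      rw [h5]
      have : -(-(i + 1) + 1) = i := by ring
      rw [this]
      ring

theorem chainS_neg (t : ℤ → ℝ) : ∀ n : ℕ,
    chainS t (-(n:ℤ)) = -∑ j ∈ Finset.range n, t ((j:ℤ) - n) := by
  intro n
  induction n with
  | zero => simp [chainS]
  | succ n ih =>
    have h1 : (-(n:ℤ)) = (-((n:ℤ)+1)) + 1 := by ring
    have h2 := chainS_succ t (-((n:ℤ)+1))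
    rw [← h1] at h2
    -- h2 : chainS t (-n) = chainS t (-(n+1)) + t (-(n+1))
    have h3 : chainS t (-((n:ℤ)+1)) = chainS t (-(n:ℤ)) - t (-((n:ℤ)+1)) := by
      rw [h2]; ring
    have h4 : (-(((n:ℕ)+1:ℕ)):ℤ) = -((n:ℤ)+1) := by push_cast; ring
    rw [h4, h3, ih]
    have h5 : ∀ j:ℕ, ((j:ℤ) - (((n:ℕ)+1:ℕ):ℤ)) = (j:ℤ) - ((n:ℤ)+1) := by
      intro j; push_cast; ring
    simp only [h5]
    rw [Finset.sum_range_succ' (fun j => t ((j:ℤ) - ((n:ℤ)+1))) n]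
    push_cast
    have : ∀ j ∈ Finset.range n, t ((j:ℤ) + 1 - ((n:ℤ)+1)) = t ((j:ℤ) - n) := by
      intro j _; congr 1; ring
    rw [Finset.sum_congr rfl this]
    have : ((0:ℤ) - ((n:ℤ)+1)) = -((n:ℤ)+1) := by ring
    rw [this]
    ring

theorem chainS_eq_shift (t : ℤ → ℝ) (n : ℕ) (m : ℕ) :
    chainS t ((m : ℤ) - n) =
      finChainS (fun j => t ((j:ℤ) - n)) m - finChainS (fun j => t ((j:ℤ) - n)) n := by
  induction m with
  | zero =>
    have : ((0:ℕ):ℤ) - (n:ℤ) = -(n:ℤ) := by push_cast; ring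
    rw [this, chainS_neg t n, finChainS_zero, finChainS]
    ring
  | succ m ih =>
    have h1 : ((m:ℤ) + 1 - n) = ((m:ℤ) - n) + 1 := by ring
    push_cast
    rw [h1, chainS_succ, ih, finChainS_succ]
    ring

section Flow

variable {M : Type*} [MetricSpace M] [CompactSpace M] {φ : ℝ → M → M}

theorem potp_uc_move (hc : Continuous fun p : ℝ × M => φ p.1 p.2)
    (h0 : ∀ x : M, φ 0 x = x) {ε : ℝ} (hε : 0 < ε) :
    ∃ D > 0, ∀ s : ℝ, |s| ≤ D → ∀ x : M, dist (φ s x) x ≤ ε := by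
  have hK : IsCompact ((Set.Icc (-1:ℝ) 1) ×ˢ (Set.univ : Set M)) :=
    isCompact_Icc.prod isCompact_univ
  have huc := hK.uniformContinuousOn_of_continuous hc.continuousOn
  rw [Metric.uniformContinuousOn_iff] at huc
  obtain ⟨δ, hδ, hd⟩ := huc (ε/2) (by linarith)
  refine ⟨min (δ/2) 1, by positivity, ?_⟩
  intro s hs x
  have hs1 : |s| ≤ 1 := le_trans hs (min_le_right _ _)
  have hmem : ((s, x) : ℝ × M) ∈ (Set.Icc (-1:ℝ) 1) ×ˢ (Set.univ : Set M) := by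
    constructor
    · exact abs_le.1 hs1
    · trivial
  have hmem0 : (((0:ℝ), x) : ℝ × M) ∈ (Set.Icc (-1:ℝ) 1) ×ˢ (Set.univ : Set M) := by
    constructor
    · constructor <;> norm_num
    · trivial
  have hdist : dist ((s, x) : ℝ × M) ((0:ℝ), x) < δ := by
    rw [Prod.dist_eq]
    simp only [dist_self]
    rw [Real.dist_eq, sub_zero]
    have : |s| ≤ δ/2 := le_trans hs (min_le_left _ _)
    calc max |s| 0 = |s| := max_eq_left (abs_nonneg s)
    _ < δ := by linarith
  have := hd _ hmem _ hmem0 hdist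
  simp only at this
  rw [h0 x] at this
  linarith

theorem potp_uc_two (hc : Continuous fun p : ℝ × M => φ p.1 p.2)
    {ε : ℝ} (hε : 0 < ε) :
    ∃ η > 0, ∀ x y : M, dist x y ≤ η → ∀ s : ℝ, |s| ≤ 2 → dist (φ s x) (φ s y) ≤ ε := by
  have hK : IsCompact ((Set.Icc (-2:ℝ) 2) ×ˢ (Set.univ : Set M)) :=
    isCompact_Icc.prod isCompact_univ
  have huc := hK.uniformContinuousOn_of_continuous hc.continuousOn
  rw [Metric.uniformContinuousOn_iff] at huc
  obtain ⟨δ, hδ, hd⟩ := huc (ε/2) (by linarith)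
  refine ⟨δ/2, by positivity, ?_⟩
  intro x y hxy s hs
  have hmem : ((s, x) : ℝ × M) ∈ (Set.Icc (-2:ℝ) 2) ×ˢ (Set.univ : Set M) :=
    ⟨abs_le.1 hs, trivial⟩
  have hmem' : ((s, y) : ℝ × M) ∈ (Set.Icc (-2:ℝ) 2) ×ˢ (Set.univ : Set M) :=
    ⟨abs_le.1 hs, trivial⟩
  have hdist : dist ((s, x) : ℝ × M) ((s, y)) < δ := by
    rw [Prod.dist_eq]
    simp only [dist_self]
    calc max 0 (dist x y) = dist x y := max_eq_right dist_nonneg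
    _ ≤ δ/2 := hxy
    _ < δ := by linarith
  have := hd _ hmem _ hmem' hdist
  simp only at this
  linarith

theorem potp_mul_period (h0 : ∀ x : M, φ 0 x = x)
    (hadd : ∀ s t : ℝ, ∀ x : M, φ (s + t) x = φ s (φ t x))
    {q : M} {s : ℝ} (hq : φ s q = q) : ∀ k : ℕ, φ ((k:ℝ) * s) q = q := by
  intro k
  induction k with
  | zero => simpa using h0 q
  | succ k ih =>
    have h1 : ((k:ℝ)+1) * s = (k:ℝ)*s + s := by ring
    push_cast
    rw [h1, hadd, hq, ih]

theorem potp_no_small_period (hc : Continuous fun p : ℝ × M => φ p.1 p.2)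
    (h0 : ∀ x : M, φ 0 x = x)
    (hadd : ∀ s t : ℝ, ∀ x : M, φ (s + t) x = φ s (φ t x))
    {H : Set M} (hHcomp : IsCompact H)
    (hHnonsing : ∀ p ∈ H, ¬ ∀ τ : ℝ, φ τ p = p) :
    ∃ Tm : ℝ, 0 < Tm ∧ ∀ p ∈ H, ∀ s : ℝ, 0 < s → s ≤ Tm → φ s p ≠ p := by
  by_contra hcon
  push_neg at hcon
  have hcon' : ∀ Tm : ℝ, 0 < Tm → ∃ p ∈ H, ∃ s : ℝ, 0 < s ∧ s ≤ Tm ∧ φ s p = p := by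
    intro Tm hTm
    obtain ⟨p, hp, s, hs1, hs2, hs3⟩ := hcon Tm hTm
    exact ⟨p, hp, s, hs1, hs2, hs3⟩
  set P : ℕ → Set M := fun n => {p | p ∈ H ∧ ∃ s : ℝ, 0 < s ∧ s ≤ 1/((n:ℝ)+1) ∧ φ s p = p}
    with hP
  have hPne : ∀ n, (P n).Nonempty := by
    intro n
    obtain ⟨p, hp, s, hs1, hs2, hs3⟩ := hcon' (1/((n:ℝ)+1)) (by positivity)
    exact ⟨p, hp, s, hs1, hs2, hs3⟩
  have hPsub : ∀ n, P n ⊆ H := fun n p hp => hp.1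
  have hPanti : ∀ m n, m ≤ n → P n ⊆ P m := by
    intro m n hmn p hp
    obtain ⟨hpH, s, hs1, hs2, hs3⟩ := hp
    refine ⟨hpH, s, hs1, le_trans hs2 ?_, hs3⟩
    apply one_div_le_one_div_of_le (by positivity)
    have : (m:ℝ) ≤ n := by exact_mod_cast hmn
    linarith
  set C : ℕ → Set M := fun n => closure (P n) with hC
  have hCsub : ∀ n, C n ⊆ H := fun n =>
    closure_minimal (hPsub n) hHcomp.isClosed
  have hCcomp : ∀ n, IsCompact (C n) := fun n =>
    hHcomp.of_isClosed_subset isClosed_closure (hCsub n)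
  have hCne : ∀ n, (C n).Nonempty := fun n => (hPne n).closure
  have hCdir : Directed (fun x1 x2 : Set M => x1 ⊇ x2) C := by
    intro m n
    refine ⟨max m n, ?_, ?_⟩
    · exact closure_mono (hPanti m _ (le_max_left m n))
    · exact closure_mono (hPanti n _ (le_max_right m n))
  obtain ⟨p, hp⟩ := IsCompact.nonempty_iInter_of_directed_nonempty_isCompact_isClosed
    C hCdir hCne hCcomp (fun n => isClosed_closure)
  have hpH : p ∈ H := hCsub 0 (by exact Set.mem_iInter.1 hp 0)
  apply hHnonsing p hpH
  have key : ∀ τ : ℝ, 0 < τ → φ τ p = p := by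
    intro τ hτ
    have hd0 : ∀ ε : ℝ, 0 < ε → dist (φ τ p) p ≤ ε := by
      intro ε hε
      obtain ⟨D, hD, hmov⟩ := potp_uc_move hc h0 (show (0:ℝ) < ε/3 by linarith)
      have hcτ : Continuous (fun x : M => φ τ x) := by
        have : (fun x : M => φ τ x) = (fun q : ℝ × M => φ q.1 q.2) ∘ fun x => (τ, x) := rfl
        rw [this]
        exact hc.comp (continuous_const.prodMk continuous_id)
      rw [Metric.continuous_iff] at hcτ
      obtain ⟨ρ, hρ, hcp⟩ := hcτ p (ε/3) (by linarith)
      obtain ⟨n, hn⟩ := exists_nat_one_div_lt hD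
      have hpc : p ∈ closure (P n) := Set.mem_iInter.1 hp n
      rw [Metric.mem_closure_iff] at hpc
      obtain ⟨q, hq, hdq⟩ := hpc (min ρ (ε/3)) (by positivity)
      obtain ⟨hqH, s, hs0, hsle, hsq⟩ := hq
      have hsD : s ≤ D := le_trans hsle (le_of_lt hn)
      set k := ⌊τ / s⌋₊ with hk
      have hk1 : (k:ℝ) * s ≤ τ := by
        rw [← le_div_iff₀ hs0]
        exact Nat.floor_le (by positivity)
      have hk2 : τ < ((k:ℝ)+1) * s := by
        rw [← div_lt_iff₀ hs0]
        exact_mod_cast Nat.lt_floor_add_one (τ/s)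
      set r := τ - (k:ℝ)*s with hr
      have hr0 : 0 ≤ r := by simp [hr]; linarith
      have hrs : r < s := by simp [hr]; nlinarith
      have hφτq : φ τ q = φ r q := by
        have : τ = r + (k:ℝ)*s := by ring
        rw [this, hadd, potp_mul_period h0 hadd hsq]
      have h1 : dist (φ τ q) q ≤ ε/3 := by
        rw [hφτq]
        exact hmov r (by rw [abs_of_nonneg hr0]; linarith) q
      have h2 : dist (φ τ p) (φ τ q) ≤ ε/3 := by
        have := hcp q (by rw [dist_comm]; exact lt_of_lt_of_le hdq (min_le_left _ _))
        rw [dist_comm] at this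
        exact le_of_lt this
      have h3 : dist q p ≤ ε/3 := by
        rw [dist_comm]
        exact le_of_lt (lt_of_lt_of_le hdq (min_le_right _ _))
      calc dist (φ τ p) p ≤ dist (φ τ p) (φ τ q) + dist (φ τ q) q + dist q p :=
            dist_triangle4 _ _ _ _
      _ ≤ ε/3 + ε/3 + ε/3 := by linarith
      _ = ε := by ring
    have : dist (φ τ p) p = 0 := by
      by_contra hne
      have hpos : 0 < dist (φ τ p) p := lt_of_le_of_ne dist_nonneg (Ne.symm hne)
      have := hd0 (dist (φ τ p) p / 2) (by linarith)
      linarith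
    exact dist_eq_zero.1 this
  intro τ
  rcases lt_trichotomy τ 0 with h | h | h
  · have hpos := key (-τ) (by linarith)
    calc φ τ p = φ τ (φ (-τ) p) := by rw [hpos]
    _ = φ (τ + -τ) p := (hadd τ (-τ) p).symm
    _ = p := by rw [add_neg_cancel]; exact h0 p
  · rw [h]; exact h0 p
  · exact key τ h

end Flow


section Flow
variable {M : Type*} [MetricSpace M] [CompactSpace M] {φ : ℝ → M → M}

theorem potp_inv {H : Set M} (hHinv : ∀ τ : ℝ, φ τ '' H = H) {p : M} (hp : p ∈ H) (s : ℝ) :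
    φ s p ∈ H := by
  rw [← hHinv s]; exact ⟨p, hp, rfl⟩

theorem potp_min_dist (hc : Continuous fun p : ℝ × M => φ p.1 p.2)
    (h0 : ∀ x : M, φ 0 x = x)
    (hadd : ∀ s t : ℝ, ∀ x : M, φ (s + t) x = φ s (φ t x))
    {H : Set M} (hHcomp : IsCompact H) (hne : H.Nonempty)
    (hHinv : ∀ τ : ℝ, φ τ '' H = H)
    {t₀ Tm : ℝ} (ht₀ : 0 < t₀) (ht₀Tm : t₀ ≤ Tm)
    (hTm : ∀ p ∈ H, ∀ s : ℝ, 0 < s → s ≤ Tm → φ s p ≠ p) :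
    ∃ e : ℝ, 0 < e ∧ ∀ p ∈ H, ∀ F : ℝ, |F| = t₀ → e ≤ dist (φ F p) p := by
  have hfc : Continuous (fun x : M => dist (φ t₀ x) x) := by
    have h1 : Continuous (fun x : M => φ t₀ x) :=
      hc.comp (continuous_const.prodMk continuous_id)
    exact h1.dist continuous_id
  obtain ⟨x₀, hx₀, hmin⟩ := hHcomp.exists_isMinOn hne hfc.continuousOn
  have hepos : 0 < dist (φ t₀ x₀) x₀ := by
    rw [dist_pos]
    exact hTm x₀ hx₀ t₀ ht₀ ht₀Tm
  refine ⟨dist (φ t₀ x₀) x₀, hepos, ?_⟩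
  intro p hp F hF
  rcases (abs_eq (le_of_lt ht₀)).1 hF with h | h
  · subst h; exact hmin hp
  · subst h
    set q := φ (-t₀) p with hq
    have hqH : q ∈ H := potp_inv hHinv hp _
    have hqp : φ t₀ q = p := by
      rw [hq, ← hadd, add_neg_cancel, h0]
    have : dist (φ (-t₀) p) p = dist (φ t₀ q) q := by
      rw [hqp, dist_comm]
    rw [this]
    exact hmin hqH

theorem potp_seg_dist
    (hadd : ∀ s t : ℝ, ∀ x : M, φ (s + t) x = φ s (φ t x))
    {H : Set M} (hHinv : ∀ τ : ℝ, φ τ '' H = H)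
    {t₀ e η ε'' : ℝ} (ht₀ : 0 < t₀) (ht₀1 : t₀ ≤ 1)
    (he : ∀ p ∈ H, ∀ F : ℝ, |F| = t₀ → e ≤ dist (φ F p) p)
    (hη : ∀ x y : M, dist x y ≤ η → ∀ s : ℝ, |s| ≤ 2 → dist (φ s x) (φ s y) ≤ e/3)
    (hε''η : ε'' ≤ η) (hε''e : ε'' ≤ e/3) (hepos : 0 < e)
    {g : ℝ → ℝ} (hg : Continuous g) {z : M} {p : M} (hp : p ∈ H) {a b : ℝ}
    (htr : ∀ w ∈ Set.Icc a b, dist (φ (w - a) p) (φ (g w) z) ≤ ε'')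
    {u v : ℝ} (hau : a ≤ u) (huv : u ≤ v) (hvb : v ≤ b) (hv1 : v - u ≤ 1) :
    |g v - g u - (v - u)| ≤ t₀ := by
  by_contra hcon
  push_neg at hcon
  set F : ℝ → ℝ := fun w => g w - g u - (w - u) with hFdef
  have hFc : ContinuousOn F (Set.Icc u v) :=
    ((hg.sub continuous_const).sub (continuous_id.sub continuous_const)).continuousOn
  have hFu : F u = 0 := by simp [hFdef]
  have hcon' : t₀ < |F v| := hcon
  have hex : ∃ w ∈ Set.Icc u v, F w = t₀ ∨ F w = -t₀ := by
    rcases lt_or_ge t₀ (F v) with h | h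
    · obtain ⟨w, hw, hFw⟩ := intermediate_value_Icc huv hFc
        (show t₀ ∈ Set.Icc (F u) (F v) by rw [hFu]; exact ⟨le_of_lt ht₀, le_of_lt h⟩)
      exact ⟨w, hw, Or.inl hFw⟩
    · have h2 : F v < -t₀ := by
        by_contra h3
        push_neg at h3
        have : |F v| ≤ t₀ := abs_le.2 ⟨h3, h⟩
        linarith
      obtain ⟨w, hw, hFw⟩ := intermediate_value_Icc' huv hFc
        (show -t₀ ∈ Set.Icc (F v) (F u) by rw [hFu]; exact ⟨le_of_lt h2, by linarith⟩)
      exact ⟨w, hw, Or.inr hFw⟩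
  obtain ⟨w, hw, hσ⟩ := hex
  have habsσ : |F w| = t₀ := by
    rcases hσ with h | h <;> rw [h]
    · exact abs_of_pos ht₀
    · rw [abs_neg]; exact abs_of_pos ht₀
  have hpwH : φ (w - a) p ∈ H := potp_inv hHinv hp _
  have haaeq : g w - g u = (w - u) + F w := by simp [hFdef]
  have haabs : |g w - g u| ≤ 2 := by
    rw [haaeq]
    have h1 : 0 ≤ w - u := by linarith [hw.1]
    have h2 : w - u ≤ 1 := by linarith [hw.2]
    have h3 := abs_le.1 (le_of_eq habsσ)
    rw [abs_le]
    constructor <;> linarith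
  have h1 : dist (φ (u - a) p) (φ (g u) z) ≤ ε'' := htr u ⟨hau, le_trans huv hvb⟩
  have h3 : dist (φ (g w - g u) (φ (u - a) p)) (φ (g w - g u) (φ (g u) z)) ≤ e/3 :=
    hη _ _ (h1.trans hε''η) _ haabs
  have h4 : φ (g w - g u) (φ (g u) z) = φ (g w) z := by
    rw [← hadd]; congr 1; ring
  have h6 : φ (g w - g u) (φ (u - a) p) = φ (F w) (φ (w - a) p) := by
    have heq : g w - g u + (u - a) = F w + (w - a) := by rw [haaeq]; ring
    rw [← hadd, ← hadd, heq]
  have h5 : dist (φ (g w) z) (φ (w - a) p) ≤ e/3 := by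
    have := htr w ⟨le_trans hau hw.1, le_trans hw.2 hvb⟩
    rw [dist_comm] at this
    exact le_trans this hε''e
  have h7 : e ≤ dist (φ (F w) (φ (w - a) p)) (φ (w - a) p) := he _ hpwH (F w) habsσ
  have h8 : dist (φ (F w) (φ (w - a) p)) (φ (w - a) p) ≤ e/3 + e/3 := by
    calc dist (φ (F w) (φ (w - a) p)) (φ (w - a) p)
        ≤ dist (φ (F w) (φ (w - a) p)) (φ (g w) z) + dist (φ (g w) z) (φ (w - a) p) :=
          dist_triangle _ _ _
    _ ≤ e/3 + e/3 := by
        refine add_le_add ?_ h5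
        rw [← h6, ← h4]
        exact h3
  linarith
end Flow



theorem finChainS_mono (t : ℕ → ℝ) {k : ℕ} (ht : ∀ i ≤ k, 1 ≤ t i) :
    ∀ i j : ℕ, i ≤ j → j ≤ k + 1 → finChainS t i ≤ finChainS t j := by
  intro i j hij hjk
  induction j with
  | zero => simp_all
  | succ j ih =>
    rcases Nat.eq_or_lt_of_le hij with h | h
    · rw [h]
    · have h1 : finChainS t i ≤ finChainS t j := ih (by omega) (by omega)
      rw [finChainS_succ]
      have := ht j (by omega)
      linarith

theorem finChainS_nonneg (t : ℕ → ℝ) {k : ℕ} (ht : ∀ i ≤ k, 1 ≤ t i) {j : ℕ} (hj : j ≤ k + 1) :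
    0 ≤ finChainS t j := by
  have := finChainS_mono t ht 0 j (Nat.zero_le _) hj
  rwa [finChainS_zero] at this

theorem potp_loc (tt : ℕ → ℝ) : ∀ m : ℕ, ∀ u : ℝ, 0 ≤ u → u < finChainS tt (m+1) →
    ∃ j ≤ m, finChainS tt j ≤ u ∧ u < finChainS tt (j+1) := by
  intro m
  induction m with
  | zero =>
    intro u hu hu2
    exact ⟨0, le_rfl, by rw [finChainS_zero]; exact hu, hu2⟩
  | succ m ih =>
    intro u hu hu2
    by_cases h : u < finChainS tt (m+1)
    · obtain ⟨j, hj, h1, h2⟩ := ih u hu h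
      exact ⟨j, by omega, h1, h2⟩
    · exact ⟨m+1, le_rfl, le_of_not_gt h, hu2⟩

section Flow
variable {M : Type*} [MetricSpace M] [CompactSpace M] {φ : ℝ → M → M}

theorem potp_closed_trace
    (h0 : ∀ x : M, φ 0 x = x)
    {k : ℕ} {xx : ℕ → M} {tt : ℕ → ℝ} {g : ℝ → ℝ} {z : M} {ε₂ δ : ℝ}
    (hδ0 : 0 ≤ δ)
    (htt : ∀ i ≤ k, 1 ≤ tt i)
    (hjump : ∀ i < k, dist (φ (tt i) (xx i)) (xx (i+1)) ≤ δ)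
    (htr1 : ∀ i ≤ k, ∀ s : ℝ, finChainS tt i ≤ s → s < finChainS tt (i+1) →
      dist (φ (s - finChainS tt i) (xx i)) (φ (g s) z) ≤ ε₂)
    (htr2 : dist (φ (tt k) (xx k)) (φ (g (finChainS tt (k + 1))) z) ≤ ε₂) :
    ∀ j ≤ k, ∀ w ∈ Set.Icc (finChainS tt j) (finChainS tt (j+1)),
      dist (φ (w - finChainS tt j) (xx j)) (φ (g w) z) ≤ ε₂ + δ := by
  intro j hj w hw
  rcases lt_or_eq_of_le hw.2 with hlt | heq
  · exact le_trans (htr1 j hj w hw.1 hlt) (by linarith)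
  · subst heq
    have hstep : finChainS tt (j+1) - finChainS tt j = tt j := by
      rw [finChainS_succ]; ring
    rw [hstep]
    rcases Nat.eq_or_lt_of_le hj with hjk | hjk
    · subst hjk
      exact le_trans htr2 (by linarith)
    · have hj1 : j + 1 ≤ k := hjk
      have h1 := htr1 (j+1) hj1 (finChainS tt (j+1)) le_rfl
        (by rw [finChainS_succ (tt) (j+1)]; have := htt (j+1) hj1; linarith)
      rw [sub_self, h0] at h1
      calc dist (φ (tt j) (xx j)) (φ (g (finChainS tt (j+1))) z)
          ≤ dist (φ (tt j) (xx j)) (xx (j+1)) + dist (xx (j+1)) (φ (g (finChainS tt (j+1))) z) :=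
            dist_triangle _ _ _
      _ ≤ δ + ε₂ := add_le_add (hjump j hjk) h1
      _ = ε₂ + δ := by ring

theorem potp_step_dist
    (hadd : ∀ s t : ℝ, ∀ x : M, φ (s + t) x = φ s (φ t x))
    {H : Set M} (hHinv : ∀ τ : ℝ, φ τ '' H = H)
    {t₀ e η ε'' : ℝ} (ht₀ : 0 < t₀) (ht₀1 : t₀ ≤ 1)
    (he : ∀ p ∈ H, ∀ F : ℝ, |F| = t₀ → e ≤ dist (φ F p) p)
    (hη : ∀ x y : M, dist x y ≤ η → ∀ s : ℝ, |s| ≤ 2 → dist (φ s x) (φ s y) ≤ e/3)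
    (hε''η : ε'' ≤ η) (hε''e : ε'' ≤ e/3) (hepos : 0 < e)
    {g : ℝ → ℝ} (hg : Continuous g) {z : M}
    {k : ℕ} {xx : ℕ → M} {tt : ℕ → ℝ}
    (hmem : ∀ i ≤ k, xx i ∈ H)
    (htt : ∀ i ≤ k, 1 ≤ tt i)
    (htrc : ∀ j ≤ k, ∀ w ∈ Set.Icc (finChainS tt j) (finChainS tt (j+1)),
      dist (φ (w - finChainS tt j) (xx j)) (φ (g w) z) ≤ ε'')
    {u v : ℝ} (h0u : 0 ≤ u) (huv : u ≤ v) (hvS : v ≤ finChainS tt (k+1))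
    (hd1 : v - u ≤ 1) :
    |g v - g u - (v - u)| ≤ 2*t₀ := by
  rcases eq_or_lt_of_le (le_trans huv hvS) with hu | hu
  · rw [← hu] at hvS
    have hveq : v = u := le_antisymm hvS huv
    rw [hveq]
    simp
    positivity
  · obtain ⟨j, hj, hju, hju2⟩ := potp_loc tt k u h0u hu
    have hseg : ∀ u' v' : ℝ, finChainS tt j ≤ u' → u' ≤ v' → v' ≤ finChainS tt (j+1) →
        v' - u' ≤ 1 → |g v' - g u' - (v' - u')| ≤ t₀ :=
      fun u' v' h1 h2 h3 h4 => potp_seg_dist hadd hHinv ht₀ ht₀1 he hη hε''η hε''e hepos hg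
        (hmem j hj) (htrc j hj) h1 h2 h3 h4
    by_cases hvj : v ≤ finChainS tt (j+1)
    · exact le_trans (hseg u v hju huv hvj hd1) (by linarith)
    · push_neg at hvj
      have hjk : j < k := by
        rcases Nat.eq_or_lt_of_le hj with h | h
        · exfalso; rw [h] at hvj; linarith
        · exact h
      have hj1k : j + 1 ≤ k := hjk
      have hvS2 : v ≤ finChainS tt (j+1+1) := by
        have h1 : finChainS tt (j+1) + 1 ≤ finChainS tt (j+1+1) := by
          rw [finChainS_succ tt (j+1)]
          have := htt (j+1) hj1k
          linarith
        linarith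
      have d1 : |g (finChainS tt (j+1)) - g u - (finChainS tt (j+1) - u)| ≤ t₀ :=
        hseg u (finChainS tt (j+1)) hju (le_of_lt hju2) le_rfl (by linarith)
      have hseg2 : ∀ u' v' : ℝ, finChainS tt (j+1) ≤ u' → u' ≤ v' → v' ≤ finChainS tt (j+1+1) →
          v' - u' ≤ 1 → |g v' - g u' - (v' - u')| ≤ t₀ :=
        fun u' v' h1 h2 h3 h4 => potp_seg_dist hadd hHinv ht₀ ht₀1 he hη hε''η hε''e hepos hg
          (hmem (j+1) hj1k) (htrc (j+1) hj1k) h1 h2 h3 h4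
      have d2 : |g v - g (finChainS tt (j+1)) - (v - finChainS tt (j+1))| ≤ t₀ :=
        hseg2 (finChainS tt (j+1)) v le_rfl (le_of_lt hvj) hvS2 (by linarith)
      have hsum : g v - g u - (v - u) =
          (g v - g (finChainS tt (j+1)) - (v - finChainS tt (j+1))) +
          (g (finChainS tt (j+1)) - g u - (finChainS tt (j+1) - u)) := by ring
      rw [hsum]
      calc |(g v - g (finChainS tt (j+1)) - (v - finChainS tt (j+1))) +
          (g (finChainS tt (j+1)) - g u - (finChainS tt (j+1) - u))|
          ≤ |g v - g (finChainS tt (j+1)) - (v - finChainS tt (j+1))| +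
            |g (finChainS tt (j+1)) - g u - (finChainS tt (j+1) - u)| := abs_add_le _ _
      _ ≤ 2*t₀ := by linarith

theorem potp_tele
    (hadd : ∀ s t : ℝ, ∀ x : M, φ (s + t) x = φ s (φ t x))
    {H : Set M} (hHinv : ∀ τ : ℝ, φ τ '' H = H)
    {t₀ e η ε'' : ℝ} (ht₀ : 0 < t₀) (ht₀1 : t₀ ≤ 1)
    (he : ∀ p ∈ H, ∀ F : ℝ, |F| = t₀ → e ≤ dist (φ F p) p)
    (hη : ∀ x y : M, dist x y ≤ η → ∀ s : ℝ, |s| ≤ 2 → dist (φ s x) (φ s y) ≤ e/3)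
    (hε''η : ε'' ≤ η) (hε''e : ε'' ≤ e/3) (hepos : 0 < e)
    {g : ℝ → ℝ} (hg : Continuous g) {z : M}
    {k : ℕ} {xx : ℕ → M} {tt : ℕ → ℝ}
    (hmem : ∀ i ≤ k, xx i ∈ H)
    (htt : ∀ i ≤ k, 1 ≤ tt i)
    (htrc : ∀ j ≤ k, ∀ w ∈ Set.Icc (finChainS tt j) (finChainS tt (j+1)),
      dist (φ (w - finChainS tt j) (xx j)) (φ (g w) z) ≤ ε'') :
    ∀ n : ℕ, ∀ u v : ℝ, 0 ≤ u → u ≤ v → v ≤ finChainS tt (k+1) → v - u ≤ (n:ℝ) + 1 →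
      |g v - g u - (v - u)| ≤ 2*t₀*((n:ℝ)+1) := by
  intro n
  induction n with
  | zero =>
    intro u v h1 h2 h3 h4
    have := potp_step_dist hadd hHinv ht₀ ht₀1 he hη hε''η hε''e hepos hg hmem htt htrc
      h1 h2 h3 (by push_cast at h4; linarith)
    push_cast
    linarith
  | succ n ih =>
    intro u v h1 h2 h3 h4
    by_cases h5 : v - u ≤ 1
    · have := potp_step_dist hadd hHinv ht₀ ht₀1 he hη hε''η hε''e hepos hg hmem htt htrc
        h1 h2 h3 h5
      push_cast
      nlinarith [ht₀.le]
    · push_neg at h5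
      have hu1v : u + 1 ≤ v := by linarith
      have s1 := potp_step_dist hadd hHinv ht₀ ht₀1 he hη hε''η hε''e hepos hg hmem htt htrc
        h1 (by linarith : u ≤ u + 1) (by linarith) (by linarith)
      have s2 := ih (u+1) v (by linarith) hu1v h3 (by push_cast at h4 ⊢; linarith)
      have hsum : g v - g u - (v - u) =
          (g v - g (u+1) - (v - (u+1))) + (g (u+1) - g u - (u + 1 - u)) := by ring
      rw [hsum]
      push_cast at s2 ⊢
      calc |(g v - g (u+1) - (v - (u+1))) + (g (u+1) - g u - (u + 1 - u))|
          ≤ |g v - g (u+1) - (v - (u+1))| + |g (u+1) - g u - (u + 1 - u)| := abs_add_le _ _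
      _ ≤ 2*t₀*((n:ℝ)+1+1) := by linarith
end Flow

section P4
open intervalIntegral MeasureTheory

theorem potp_smooth {g : ℝ → ℝ} (hg : Continuous g) {B t₀ : ℝ} (hB : 0 ≤ B) (ht₀ : 0 ≤ t₀)
    (hdist : ∀ u v : ℝ, 0 ≤ u → u ≤ v → v ≤ B → |g v - g u - (v - u)| ≤ 2*t₀*((v-u) + 1)) :
    ∃ G : ℝ → ℝ, (∀ u v : ℝ, u ≤ v → |G v - G u - (v - u)| ≤ 4*t₀*(v-u)) ∧
      (∀ w : ℝ, 0 ≤ w → w ≤ B → |G w - g w| ≤ 4*t₀) := by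
  set clamp : ℝ → ℝ := fun w => max 0 (min w B) with hclampdef
  have hc0 : ∀ w, 0 ≤ clamp w := fun w => le_max_left _ _
  have hcB : ∀ w, clamp w ≤ B := fun w => max_le hB (min_le_right _ _)
  have hlip : ∀ u v : ℝ, u ≤ v → clamp u ≤ clamp v ∧ clamp v - clamp u ≤ v - u := by
    intro u v huv
    have hm : min v B - min u B ≤ v - u := by
      rcases le_total u B with h | h
      · rw [min_eq_left h]
        have := min_le_left v B
        linarith
      · rw [min_eq_right h, min_eq_right (le_trans h huv)]
        linarith
    have hmm : min u B ≤ min v B := min_le_min huv le_rfl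
    constructor
    · exact max_le_max le_rfl hmm
    · have hmax : max 0 (min v B) - max 0 (min u B) ≤ min v B - min u B := by
        rcases le_total 0 (min u B) with h | h
        · rw [max_eq_right h, max_eq_right (le_trans h hmm)]
        · rw [max_eq_left h]
          rcases le_total 0 (min v B) with h2 | h2
          · rw [max_eq_right h2]; linarith
          · rw [max_eq_left h2]; linarith
      calc clamp v - clamp u ≤ min v B - min u B := hmax
      _ ≤ v - u := hm
  set Gd : ℝ → ℝ := fun w => g (clamp w) + (w - clamp w) with hGddef
  have hGg : ∀ w : ℝ, 0 ≤ w → w ≤ B → Gd w = g w := by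
    intro w h1 h2
    have : clamp w = w := by rw [hclampdef]; simp only []; rw [min_eq_left h2, max_eq_right h1]
    simp [hGddef, this]
  have hGdist : ∀ u v : ℝ, u ≤ v → |Gd v - Gd u - (v - u)| ≤ 2*t₀*((v-u) + 1) := by
    intro u v huv
    obtain ⟨hmono, hlipuv⟩ := hlip u v huv
    have key : Gd v - Gd u - (v - u) =
        g (clamp v) - g (clamp u) - (clamp v - clamp u) := by
      simp only [hGddef]; ring
    rw [key]
    have h1 := hdist (clamp u) (clamp v) (hc0 u) hmono (hcB v)
    calc |g (clamp v) - g (clamp u) - (clamp v - clamp u)|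
        ≤ 2*t₀*((clamp v - clamp u) + 1) := h1
    _ ≤ 2*t₀*((v - u) + 1) := by nlinarith
  have hclampc : Continuous clamp := continuous_const.max (continuous_id.min continuous_const)
  have hGcont : Continuous Gd := (hg.comp hclampc).add (continuous_id.sub hclampc)
  have hInt : ∀ a b : ℝ, IntervalIntegrable Gd volume a b := fun a b =>
    hGcont.intervalIntegrable a b
  have hGcont1 : Continuous (fun w => Gd (w+1)) := hGcont.comp (continuous_id.add continuous_const)
  have hInt1 : ∀ a b : ℝ, IntervalIntegrable (fun w => Gd (w+1)) volume a b := fun a b =>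
    hGcont1.intervalIntegrable a b
  set F0 : ℝ → ℝ := fun x => ∫ r in (0:ℝ)..x, Gd r with hF0def
  have hF0 : ∀ a b : ℝ, (∫ r in a..b, Gd r) = F0 b - F0 a := fun a b =>
    (integral_interval_sub_left (hInt 0 b) (hInt 0 a)).symm
  set Ghat : ℝ → ℝ := fun u => (∫ r in u..(u+1), Gd r) - 1/2 with hGhatdef
  have hGhat : ∀ u : ℝ, Ghat u = F0 (u+1) - F0 u - 1/2 := by
    intro u; rw [hGhatdef]; simp only []; rw [hF0]
  have hdiffid : ∀ u v : ℝ, Ghat v - Ghat u = ∫ w in u..v, (Gd (w+1) - Gd w) := by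
    intro u v
    rw [integral_sub (hInt1 u v) (hInt u v)]
    have h1 : (∫ w in u..v, Gd (w+1)) = F0 (v+1) - F0 (u+1) := by
      rw [integral_comp_add_right Gd 1, hF0]
    rw [h1, hF0, hGhat, hGhat]
    ring
  have hslope : ∀ u v : ℝ, u ≤ v → |Ghat v - Ghat u - (v - u)| ≤ 4*t₀*(v-u) := by
    intro u v huv
    have h2 : Ghat v - Ghat u - (v - u) = ∫ w in u..v, (Gd (w+1) - Gd w - 1) := by
      rw [integral_sub ((hInt1 u v).sub (hInt u v)) (intervalIntegrable_const)]
      rw [intervalIntegral.integral_const]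
      rw [← hdiffid]
      simp
    rw [h2]
    have h3 : ∀ w ∈ Set.uIoc u v, ‖Gd (w+1) - Gd w - 1‖ ≤ 4*t₀ := by
      intro w _
      have := hGdist w (w+1) (by linarith)
      rw [Real.norm_eq_abs]
      have h4 : (w + 1 - w) = 1 := by ring
      rw [h4] at this
      linarith
    have := intervalIntegral.norm_integral_le_of_norm_le_const h3
    rw [Real.norm_eq_abs] at this
    calc |∫ w in u..v, (Gd (w+1) - Gd w - 1)| ≤ 4*t₀ * |v - u| := this
    _ = 4*t₀*(v-u) := by rw [abs_of_nonneg (by linarith)]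
  refine ⟨Ghat, hslope, ?_⟩
  intro w h0w hwB
  have hsplit : Ghat w - Gd w = ∫ r in w..(w+1), (Gd r - Gd w - (r - w)) := by
    have hi1 : IntervalIntegrable (fun r : ℝ => Gd w + (r - w)) volume w (w+1) :=
      (continuous_const.add (continuous_id'.sub continuous_const)).intervalIntegrable _ _
    have h1 : (∫ r in w..(w+1), (Gd r - Gd w - (r - w)))
        = (∫ r in w..(w+1), Gd r) - ∫ r in w..(w+1), (Gd w + (r - w)) := by
      rw [← integral_sub (hInt w (w+1)) hi1]
      congr 1
      ext r
      ring
    have h2 : (∫ r in w..(w+1), (Gd w + (r - w))) = Gd w + 1/2 := by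
      rw [intervalIntegral.integral_add (f := fun _ : ℝ => Gd w) (g := fun r : ℝ => r - w) intervalIntegrable_const
        ((continuous_id'.sub continuous_const).intervalIntegrable _ _)]
      rw [intervalIntegral.integral_const]
      have h3 : (∫ r in w..(w+1), (r - w)) = (∫ r in w..(w+1), r) - ∫ r in w..(w+1), (w:ℝ) := by
        rw [integral_sub (intervalIntegrable_id) intervalIntegrable_const]
      rw [h3, integral_id, intervalIntegral.integral_const]
      simp
      ring
    rw [h1, h2, hGhatdef]
    simp only []
    ring
  have hGgw : Gd w = g w := hGg w h0w hwB
  have h3 : ∀ r ∈ Set.uIoc w (w+1), ‖Gd r - Gd w - (r - w)‖ ≤ 4*t₀ := by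
    intro r hr
    rw [Set.uIoc_of_le (by linarith : w ≤ w+1)] at hr
    have := hGdist w r (le_of_lt hr.1)
    rw [Real.norm_eq_abs]
    have hb : 2*t₀*((r - w) + 1) ≤ 4*t₀ := by nlinarith [hr.2]
    linarith
  have h4 := intervalIntegral.norm_integral_le_of_norm_le_const h3
  rw [Real.norm_eq_abs, ← hsplit] at h4
  calc |Ghat w - g w| = |Ghat w - Gd w| := by rw [hGgw]
  _ ≤ 4*t₀ * |w + 1 - w| := h4
  _ = 4*t₀ := by simp

end P4

theorem potp_ulim_real {U : Ultrafilter ℕ} (f : ℕ → ℝ) {C : ℝ} (hC : ∀ n, |f n| ≤ C) :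
    ∃ y : ℝ, Filter.Tendsto f (U : Filter ℕ) (𝓝 y) := by
  obtain ⟨y, _, hle⟩ := (isCompact_Icc (a := -C) (b := C)).ultrafilter_le_nhds (U.map f)
    (Filter.le_principal_iff.2 (by
      rw [Ultrafilter.coe_map, Filter.mem_map]
      exact Filter.univ_mem' fun n => abs_le.1 (hC n)))
  exact ⟨y, by rwa [Ultrafilter.coe_map] at hle⟩

theorem potp_quot_of_lip {f : ℝ → ℝ} {c : ℝ} (hc : 0 ≤ c)
    (h : ∀ u v : ℝ, u ≤ v → |f v - f u - (v - u)| ≤ c*(v-u)) :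
    ∀ s t : ℝ, s ≠ t → |(f s - f t)/(s - t) - 1| ≤ c := by
  have main : ∀ u v : ℝ, u < v → |(f v - f u)/(v - u) - 1| ≤ c := by
    intro u v huv
    have hpos : 0 < v - u := by linarith
    have heq : (f v - f u)/(v - u) - 1 = (f v - f u - (v - u))/(v - u) := by
      field_simp
    rw [heq, abs_div, abs_of_pos hpos, div_le_iff₀ hpos]
    calc |f v - f u - (v - u)| ≤ c*(v-u) := h u v huv.le
    _ = c * (v - u) := rfl
  intro s t hst
  rcases lt_or_gt_of_ne hst with hlt | hgt
  · have heq : (f s - f t)/(s - t) = (f t - f s)/(t - s) := by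
      rw [← neg_sub (f t) (f s), ← neg_sub t s, neg_div_neg_eq]
    rw [heq]
    exact main s t hlt
  · exact main t s hgt


end PotpHelpers

/-- `g` is a reparametrization: continuous, strictly increasing, `g 0 = 0`. -/
def IsRep (g : ℝ → ℝ) : Prop := Continuous g ∧ StrictMono g ∧ g 0 = 0

/-- `g` is a surjective reparametrization (the class `Rep*`). -/
def IsRepStar (g : ℝ → ℝ) : Prop := IsRep g ∧ Function.Surjective g

/-- The class `Rep(ε)`: surjective reparametrizations whose difference quotients are
ε-close to 1. -/
def IsRepEps (ε : ℝ) (g : ℝ → ℝ) : Prop :=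
  IsRepStar g ∧ ∀ s t : ℝ, s ≠ t → |(g s - g t) / (s - t) - 1| ≤ ε

variable {M : Type*} [MetricSpace M]

/-- `{x i ; t i}_{i ∈ ℤ}` is a (bi-infinite) `(δ,T)`-chain of `H` for the flow `φ`. -/
def IsChainDT (φ : ℝ → M → M) (H : Set M) (δ T : ℝ) (x : ℤ → M) (t : ℤ → ℝ) : Prop :=
  (∀ i, x i ∈ H) ∧ (∀ i, T ≤ t i) ∧ ∀ i, dist (φ (t i) (x i)) (x (i + 1)) ≤ δ

/-- `{x i ; t i}_{i = 0}^{k}` is a finite `(δ,T)`-chain of `H` for the flow `φ`. -/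
def IsFinChainDT (φ : ℝ → M → M) (H : Set M) (δ T : ℝ) (k : ℕ) (x : ℕ → M) (t : ℕ → ℝ) :
    Prop :=
  (∀ i ≤ k, x i ∈ H) ∧ (∀ i ≤ k, T ≤ t i) ∧ ∀ i < k, dist (φ (t i) (x i)) (x (i + 1)) ≤ δ

/-- The chain trajectory `x₀ * s = φ (s - S i) (x i)` (for `S i ≤ s < S (i+1)`) of a bi-infinite
chain is ε-close, for all real times `s`, to the `g`-reparametrized orbit of `z`. -/
def TracedVia (φ : ℝ → M → M) (ε : ℝ) (x : ℤ → M) (t : ℤ → ℝ) (g : ℝ → ℝ) (z : M) : Prop :=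
  ∀ i : ℤ, ∀ s : ℝ, chainS t i ≤ s → s < chainS t (i + 1) →
    dist (φ (s - chainS t i) (x i)) (φ (g s) z) ≤ ε

/-- The chain trajectory of a finite chain is ε-close, for all times `s ∈ [0, S (k+1)]`,
to the `g`-reparametrized orbit of `z`. -/
def FinTracedVia (φ : ℝ → M → M) (ε : ℝ) (k : ℕ) (x : ℕ → M) (t : ℕ → ℝ)
    (g : ℝ → ℝ) (z : M) : Prop :=
  (∀ i ≤ k, ∀ s : ℝ, finChainS t i ≤ s → s < finChainS t (i + 1) →
    dist (φ (s - finChainS t i) (x i)) (φ (g s) z) ≤ ε) ∧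
  dist (φ (t k) (x k)) (φ (g (finChainS t (k + 1))) z) ≤ ε

/-- Weak pseudo-orbit tracing property. -/
def WPOTP (φ : ℝ → M → M) (H : Set M) : Prop :=
  ∀ ε > (0 : ℝ), ∃ δ > (0 : ℝ), ∃ T > (0 : ℝ), ∀ x t, IsChainDT φ H δ T x t →
    ∃ z : M, ∃ g : ℝ → ℝ, IsRep g ∧ TracedVia φ ε x t g z

/-- Normal pseudo-orbit tracing property. -/
def NPOTP (φ : ℝ → M → M) (H : Set M) : Prop :=
  ∀ ε > (0 : ℝ), ∃ δ > (0 : ℝ), ∃ T > (0 : ℝ), ∀ x t, IsChainDT φ H δ T x t →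
    ∃ z : M, ∃ g : ℝ → ℝ, IsRepStar g ∧ TracedVia φ ε x t g z

/-- Strong pseudo-orbit tracing property. -/
def SPOTP (φ : ℝ → M → M) (H : Set M) : Prop :=
  ∀ ε > (0 : ℝ), ∃ δ > (0 : ℝ), ∃ T > (0 : ℝ), ∀ x t, IsChainDT φ H δ T x t →
    ∃ z : M, ∃ g : ℝ → ℝ, IsRepEps ε g ∧ TracedVia φ ε x t g z

/-- Finite pseudo-orbit tracing property. -/
def FPOTP (φ : ℝ → M → M) (H : Set M) : Prop :=
  ∀ ε > (0 : ℝ), ∃ δ > (0 : ℝ), ∃ T > (0 : ℝ), ∀ k x t, IsFinChainDT φ H δ T k x t →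
    ∃ z : M, ∃ g : ℝ → ℝ, IsRep g ∧ FinTracedVia φ ε k x t g z

/-- Strong finite pseudo-orbit tracing property. -/
def SFPOTP (φ : ℝ → M → M) (H : Set M) : Prop :=
  ∀ ε > (0 : ℝ), ∃ δ > (0 : ℝ), ∃ T > (0 : ℝ), ∀ k x t, IsFinChainDT φ H δ T k x t →
    ∃ z : M, ∃ g : ℝ → ℝ, IsRepEps ε g ∧ FinTracedVia φ ε k x t g z


open Filter Topology Set in
set_option maxHeartbeats 2000000 in
theorem nonsingular_fpotp_implies_spotp {M : Type*} [MetricSpace M] [CompactSpace M]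
    (φ : ℝ → M → M)
    (hflow_cont : Continuous fun p : ℝ × M => φ p.1 p.2)
    (hflow_zero : ∀ x : M, φ 0 x = x)
    (hflow_add : ∀ s t : ℝ, ∀ x : M, φ (s + t) x = φ s (φ t x))
    (H : Set M) (hHcomp : IsCompact H) (hHinv : ∀ τ : ℝ, φ τ '' H = H)
    (hHnonsing : ∀ p ∈ H, ¬ ∀ τ : ℝ, φ τ p = p)
    (hF : FPOTP φ H) : SPOTP φ H := by
  intro ε hε
  by_cases hne : H.Nonempty
  swap
  · refine ⟨1, one_pos, 1, one_pos, ?_⟩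
    intro x t hxt
    exfalso
    rw [Set.not_nonempty_iff_eq_empty] at hne
    have := hxt.1 0
    rw [hne] at this
    exact this
  obtain ⟨Tm, hTm0, hTm⟩ :=
    potp_no_small_period hflow_cont hflow_zero hflow_add hHcomp hHnonsing
  obtain ⟨D₀, hD₀0, hmov⟩ := potp_uc_move hflow_cont hflow_zero (show (0:ℝ) < ε/2 by linarith)
  set t₀ : ℝ := min (min (ε/8) (1/8)) (min Tm (D₀/4)) with ht₀def
  have ht₀0 : 0 < t₀ := by
    apply lt_min (lt_min (by linarith) (by norm_num)) (lt_min hTm0 (by linarith))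
  have ht₀a : t₀ ≤ ε/8 := le_trans (min_le_left _ _) (min_le_left _ _)
  have ht₀b : t₀ ≤ 1/8 := le_trans (min_le_left _ _) (min_le_right _ _)
  have ht₀Tm : t₀ ≤ Tm := le_trans (min_le_right _ _) (min_le_left _ _)
  have ht₀D : t₀ ≤ D₀/4 := le_trans (min_le_right _ _) (min_le_right _ _)
  have ht₀1 : t₀ ≤ 1 := by linarith
  obtain ⟨e, he0, he⟩ :=
    potp_min_dist hflow_cont hflow_zero hflow_add hHcomp hne hHinv ht₀0 ht₀Tm hTm
  obtain ⟨η, hη0, hη⟩ := potp_uc_two hflow_cont (show (0:ℝ) < e/3 by linarith)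
  set ε₂ : ℝ := min (ε/4) (min (η/2) (e/6)) with hε₂def
  have hε₂0 : 0 < ε₂ := by
    apply lt_min (by linarith) (lt_min (by linarith) (by linarith))
  have hε₂a : ε₂ ≤ ε/4 := min_le_left _ _
  have hε₂b : ε₂ ≤ η/2 := le_trans (min_le_right _ _) (min_le_left _ _)
  have hε₂c : ε₂ ≤ e/6 := le_trans (min_le_right _ _) (min_le_right _ _)
  obtain ⟨δF, hδF0, TF, hTF0, hFP⟩ := hF ε₂ hε₂0
  refine ⟨min δF ε₂, lt_min hδF0 hε₂0, max TF 1,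
    lt_of_lt_of_le one_pos (le_max_right _ _), ?_⟩
  intro x t hchain
  obtain ⟨hxmem, htlb, hjump⟩ := hchain
  have htt1 : ∀ i, 1 ≤ t i := fun i => le_trans (le_max_right TF 1) (htlb i)
  have httF : ∀ i, TF ≤ t i := fun i => le_trans (le_max_left TF 1) (htlb i)
  have hδ0 : (0:ℝ) ≤ min δF ε₂ := le_of_lt (lt_min hδF0 hε₂0)
  have hδε₂ : min δF ε₂ ≤ ε₂ := min_le_right _ _
  have hε''η : ε₂ + min δF ε₂ ≤ η := by linarith
  have hε''e : ε₂ + min δF ε₂ ≤ e/3 := by linarith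
  -- the per-truncation construction
  have key : ∀ n : ℕ, ∃ zz : M, ∃ hh : ℝ → ℝ, hh 0 = 0 ∧
      (∀ u v : ℝ, u ≤ v → |hh v - hh u - (v - u)| ≤ 4*t₀*(v-u)) ∧
      (∀ i : ℤ, -(n:ℤ) ≤ i → i ≤ (n:ℤ) → ∀ s : ℝ, chainS t i ≤ s → s < chainS t (i+1) →
        dist (φ (s - chainS t i) (x i)) (φ (hh s) zz) ≤ ε₂ + ε/2) := by
    intro n
    set k : ℕ := 2*n with hkdef
    set xx : ℕ → M := fun j => x ((j:ℤ) - n) with hxxdef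
    set tt : ℕ → ℝ := fun j => t ((j:ℤ) - n) with httdef
    have hfin : IsFinChainDT φ H δF TF k xx tt := by
      refine ⟨fun i _ => hxmem _, fun i _ => httF _, ?_⟩
      intro i _
      have hcast : ((i:ℤ) - n) + 1 = ((i+1 : ℕ) : ℤ) - n := by push_cast; ring
      have := hjump ((i:ℤ) - n)
      calc dist (φ (tt i) (xx i)) (xx (i+1))
          = dist (φ (t ((i:ℤ) - n)) (x ((i:ℤ) - n))) (x (((i:ℤ) - n) + 1)) := by
            rw [hxxdef, httdef]
            simp only []
            rw [hcast]
      _ ≤ min δF ε₂ := this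
      _ ≤ δF := min_le_left _ _
    obtain ⟨z, g, hgrep, hgtr⟩ := hFP k xx tt hfin
    obtain ⟨hgc, hgm, hg0⟩ := hgrep
    obtain ⟨htr1, htr2⟩ := hgtr
    have htt' : ∀ i ≤ k, 1 ≤ tt i := fun i _ => htt1 _
    have hjump' : ∀ i < k, dist (φ (tt i) (xx i)) (xx (i+1)) ≤ min δF ε₂ := by
      intro i _
      have hcast : ((i:ℤ) - n) + 1 = ((i+1 : ℕ) : ℤ) - n := by push_cast; ring
      have := hjump ((i:ℤ) - n)
      calc dist (φ (tt i) (xx i)) (xx (i+1))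
          = dist (φ (t ((i:ℤ) - n)) (x ((i:ℤ) - n))) (x (((i:ℤ) - n) + 1)) := by
            rw [hxxdef, httdef]
            simp only []
            rw [hcast]
      _ ≤ min δF ε₂ := this
    have htrc := potp_closed_trace hflow_zero hδ0 htt' hjump' htr1 htr2
    have hmem' : ∀ i ≤ k, xx i ∈ H := fun i _ => hxmem _
    have htele := potp_tele hflow_add hHinv ht₀0 ht₀1 he hη hε''η hε''e he0 hgc
      hmem' htt' htrc
    have hB0 : 0 ≤ finChainS tt (k+1) := finChainS_nonneg tt htt' (le_refl (k+1))
    have hdist : ∀ u v : ℝ, 0 ≤ u → u ≤ v → v ≤ finChainS tt (k+1) →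
        |g v - g u - (v - u)| ≤ 2*t₀*((v-u) + 1) := by
      intro u v h1 h2 h3
      have hfl := Nat.lt_floor_add_one (v - u)
      have hfl2 : (⌊v - u⌋₊ : ℝ) ≤ v - u := Nat.floor_le (by linarith)
      have := htele ⌊v - u⌋₊ u v h1 h2 h3 (le_of_lt hfl)
      nlinarith [ht₀0.le]
    obtain ⟨Gh, hGslope, hGclose⟩ := potp_smooth hgc hB0 ht₀0.le hdist
    set A : ℝ := finChainS tt n with hAdef
    refine ⟨φ (Gh A) z, fun s => Gh (s + A) - Gh A, by simp, ?_, ?_⟩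
    · intro u v huv
      have := hGslope (u + A) (v + A) (by linarith)
      have heq : Gh (v + A) - Gh A - (Gh (u + A) - Gh A) - (v - u)
          = Gh (v + A) - Gh (u + A) - ((v + A) - (u + A)) := by ring
      rw [heq]
      calc |Gh (v + A) - Gh (u + A) - ((v + A) - (u + A))|
          ≤ 4*t₀*((v + A) - (u + A)) := this
      _ = 4*t₀*(v - u) := by ring
    · intro i hin hin2 s h1 h2
      set j : ℕ := (i + n).toNat with hjdef
      have hjcast : (j : ℤ) = i + n := Int.toNat_of_nonneg (by omega)
      have hjk : j ≤ k := by omega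
      have hSj : finChainS tt j = chainS t i + A := by
        have := chainS_eq_shift t n j
        rw [show ((j:ℤ) - n) = i by omega] at this
        rw [hAdef]
        linarith [this]
      have hSj1 : finChainS tt (j+1) = chainS t (i+1) + A := by
        have := chainS_eq_shift t n (j+1)
        rw [show (((j+1:ℕ)):ℤ) - n = i + 1 by push_cast; omega] at this
        rw [hAdef]
        linarith [this]
      have hs1' : finChainS tt j ≤ s + A := by rw [hSj]; linarith
      have hs2' : s + A < finChainS tt (j+1) := by rw [hSj1]; linarith
      have happ := htr1 j hjk (s + A) hs1' hs2'
      have hxxj : xx j = x i := by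
        rw [hxxdef]
        simp only []
        congr 1
        omega
      have hsub : s + A - finChainS tt j = s - chainS t i := by rw [hSj]; ring
      rw [hxxj, hsub] at happ
      have h0s' : 0 ≤ s + A := le_trans (finChainS_nonneg tt htt' (by omega : j ≤ k+1)) hs1'
      have hs'B : s + A ≤ finChainS tt (k+1) :=
        le_trans (le_of_lt hs2') (finChainS_mono tt htt' (j+1) (k+1) (by omega) (le_refl _))
      have hclose := hGclose (s + A) h0s' hs'B
      have hmove : dist (φ (Gh (s + A)) z) (φ (g (s + A)) z) ≤ ε/2 := by
        have heq2 : φ (Gh (s + A)) z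
            = φ (Gh (s + A) - g (s + A)) (φ (g (s + A)) z) := by
          rw [← hflow_add]
          congr 1
          ring
        rw [heq2]
        apply hmov
        have : |Gh (s + A) - g (s + A)| ≤ 4*t₀ := hclose
        have h4D : 4*t₀ ≤ D₀ := by linarith
        linarith [this]
      have hcomp : φ (Gh (s + A) - Gh A) (φ (Gh A) z) = φ (Gh (s + A)) z := by
        rw [← hflow_add]
        congr 1
        ring
      calc dist (φ (s - chainS t i) (x i)) (φ (Gh (s + A) - Gh A) (φ (Gh A) z))
          = dist (φ (s - chainS t i) (x i)) (φ (Gh (s + A)) z) := by rw [hcomp]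
      _ ≤ dist (φ (s - chainS t i) (x i)) (φ (g (s + A)) z)
            + dist (φ (g (s + A)) z) (φ (Gh (s + A)) z) := dist_triangle _ _ _
      _ ≤ ε₂ + ε/2 := by
            rw [dist_comm (φ (g (s + A)) z)]
            exact add_le_add happ hmove
  -- pass to the limit along an ultrafilter
  choose zz hh hh0 hhlip hhtr using key
  obtain ⟨U, hU⟩ := Ultrafilter.exists_le (Filter.atTop : Filter ℕ)
  obtain ⟨ζ, hζ⟩ : ∃ y : M, Filter.Tendsto (fun n => zz n) (U : Filter ℕ) (𝓝 y) := by
    obtain ⟨y, _, hle⟩ := isCompact_univ.ultrafilter_le_nhds (U.map (fun n => zz n))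
      (Filter.le_principal_iff.2 (by
        rw [Ultrafilter.coe_map, Filter.mem_map]
        exact Filter.univ_mem' fun n => Set.mem_univ _))
    exact ⟨y, by rwa [Ultrafilter.coe_map] at hle⟩
  have hbound : ∀ s : ℝ, ∀ n : ℕ, |hh n s| ≤ 5*|s| := by
    intro s n
    have ht4 : 4*t₀ ≤ 4 := by linarith
    rcases le_total 0 s with hs | hs
    · have := hhlip n 0 s hs
      rw [hh0 n] at this
      have h1 := abs_le.1 this
      rw [abs_of_nonneg hs]
      rw [abs_le]
      constructor <;> nlinarith
    · have := hhlip n s 0 hs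
      rw [hh0 n] at this
      have h1 := abs_le.1 this
      rw [abs_of_nonpos hs]
      rw [abs_le]
      constructor <;> nlinarith
  have hlim : ∀ s : ℝ, ∃ y : ℝ, Filter.Tendsto (fun n => hh n s) (U : Filter ℕ) (𝓝 y) :=
    fun s => potp_ulim_real _ (hbound s)
  choose hhl hhlt using hlim
  have hl0 : hhl 0 = 0 := by
    have h1 : Filter.Tendsto (fun n => hh n 0) (U : Filter ℕ) (𝓝 0) := by
      have : (fun n => hh n 0) = fun _ : ℕ => (0:ℝ) := funext fun n => hh0 n
      rw [this]
      exact tendsto_const_nhds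
    exact tendsto_nhds_unique (hhlt 0) h1
  have hlip' : ∀ u v : ℝ, u ≤ v → |hhl v - hhl u - (v - u)| ≤ 4*t₀*(v-u) := by
    intro u v huv
    have ht : Filter.Tendsto (fun n => |hh n v - hh n u - (v - u)|) (U : Filter ℕ)
        (𝓝 |hhl v - hhl u - (v-u)|) :=
      (((hhlt v).sub (hhlt u)).sub tendsto_const_nhds).abs
    exact le_of_tendsto ht (Filter.Eventually.of_forall fun n => hhlip n u v huv)
  have ht₀half : 4*t₀ ≤ 1/2 := by linarith
  have hsmono : StrictMono hhl := by
    intro a b hab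
    have h1 := abs_le.1 (hlip' a b hab.le)
    nlinarith [h1.1, h1.2]
  have hcont : Continuous hhl := by
    have hL : LipschitzWith 2 hhl := by
      rw [lipschitzWith_iff_dist_le_mul]
      intro a b
      rw [Real.dist_eq, Real.dist_eq]
      rcases le_total a b with hab | hab
      · have h1 := abs_le.1 (hlip' a b hab)
        rw [abs_of_nonpos (by nlinarith [h1.1, h1.2] : hhl a - hhl b ≤ 0),
          abs_of_nonpos (by linarith : a - b ≤ 0)]
        push_cast
        nlinarith [h1.1, h1.2]
      · have h1 := abs_le.1 (hlip' b a hab)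
        rw [abs_of_nonneg (by nlinarith [h1.1, h1.2] : 0 ≤ hhl a - hhl b),
          abs_of_nonneg (by linarith : 0 ≤ a - b)]
        push_cast
        nlinarith [h1.1, h1.2]
    exact hL.continuous
  have hsurj : Function.Surjective hhl := by
    intro y
    have hb : hhl (2*|y|) ≥ |y| := by
      have h1 := abs_le.1 (hlip' 0 (2*|y|) (by positivity))
      rw [hl0] at h1
      nlinarith [h1.1, abs_nonneg y]
    have ha : hhl (-(2*|y|)) ≤ -|y| := by
      have h1 := abs_le.1 (hlip' (-(2*|y|)) 0 (by linarith [abs_nonneg y]))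
      rw [hl0] at h1
      nlinarith [h1.1, h1.2, abs_nonneg y]
    have hmem : y ∈ Set.Icc (hhl (-(2*|y|))) (hhl (2*|y|)) := by
      constructor
      · linarith [neg_abs_le y]
      · linarith [le_abs_self y]
    obtain ⟨w, _, hw⟩ := intermediate_value_Icc
      (by linarith [abs_nonneg y] : -(2*|y|) ≤ 2*|y|) hcont.continuousOn hmem
    exact ⟨w, hw⟩
  have hquot := potp_quot_of_lip (by linarith : (0:ℝ) ≤ 4*t₀) hlip'
  refine ⟨ζ, hhl, ⟨⟨⟨hcont, hsmono, hl0⟩, hsurj⟩, ?_⟩, ?_⟩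
  · intro s₁ t₁ hst
    have := hquot s₁ t₁ hst
    have h4ε : 4*t₀ ≤ ε := by linarith
    linarith
  · intro i s h1 h2
    have hev : ∀ᶠ n in (U : Filter ℕ),
        dist (φ (s - chainS t i) (x i)) (φ (hh n s) (zz n)) ≤ ε₂ + ε/2 := by
      have hev' : ∀ᶠ n in (Filter.atTop : Filter ℕ),
          dist (φ (s - chainS t i) (x i)) (φ (hh n s) (zz n)) ≤ ε₂ + ε/2 :=
        Filter.eventually_atTop.2 ⟨i.natAbs, fun n hn =>
          hhtr n i (by omega) (by omega) s h1 h2⟩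
      exact hev'.filter_mono hU
    have hφt : Filter.Tendsto (fun n => φ (hh n s) (zz n)) (U : Filter ℕ)
        (𝓝 (φ (hhl s) ζ)) := by
      have hpair : Filter.Tendsto (fun n => ((hh n s, zz n) : ℝ × M)) (U : Filter ℕ)
          (𝓝 ((hhl s, ζ) : ℝ × M)) := (hhlt s).prodMk_nhds hζ
      exact (hflow_cont.tendsto ((hhl s, ζ) : ℝ × M)).comp hpair
    have hdt : Filter.Tendsto (fun n => dist (φ (s - chainS t i) (x i)) (φ (hh n s) (zz n)))
        (U : Filter ℕ) (𝓝 (dist (φ (s - chainS t i) (x i)) (φ (hhl s) ζ))) :=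
      tendsto_const_nhds.dist hφt
    have hfin := le_of_tendsto hdt hev
    linarith
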